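/- Volume conservation of the semi-discrete scheme: if the velocities v_i satisfy the discrete divergence-free constraint Σ_i |ω_i| v_i · ⟨∇φ⟩_i = 0 for all test values φ_i, then d|ω_i|/dt = 0 for every cell i, where d|ω_i|/dt = |ω_i| ⟨∇·v⟩*_i - S_i · v_i. -/

import Mathlib

/-- Volume conservation of the semi-discrete scheme: if the velocities `vᵢ` satisfy the
discrete divergence-free constraint `Σᵢ |ωᵢ| vᵢ · ⟨∇φ⟩ᵢ = 0` for all test values `φ`, then
`d|ωᵢ|/dt = |ωᵢ| ⟨∇·v⟩*ᵢ - Sᵢ · vᵢ = 0` for every cell `i`, where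
`Sᵢ = Σⱼ (|Γ_ij|/r_ij)(xᵢ - xⱼ)`, `⟨∇φ⟩ᵢ` is the strong gradient and `⟨∇·v⟩*ᵢ` is the weak
divergence. -/
theorem semidiscrete_volume_conservation {d N : ℕ}
    (xs : Fin N → EuclideanSpace ℝ (Fin d)) (hxs : Function.Injective xs)
    (vol : Fin N → ℝ) (hvol : ∀ i, 0 < vol i)
    (Γ : Fin N → Fin N → ℝ) (hΓnn : ∀ i j, 0 ≤ Γ i j)
    (hΓsymm : ∀ i j, Γ i j = Γ j i)
    (m : Fin N → Fin N → EuclideanSpace ℝ (Fin d))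
    (hmsymm : ∀ i j, m i j = m j i)
    (v : Fin N → EuclideanSpace ℝ (Fin d))
    (hconstraint : ∀ φ : Fin N → ℝ,
      ∑ i, vol i * (inner ℝ (v i)
        (-((vol i)⁻¹ • ∑ j ∈ Finset.univ.erase i,
          ((Γ i j / dist (xs i) (xs j)) * (φ i - φ j)) • (m i j - xs i))) : ℝ) = 0) :
    ∀ i, vol i * ((vol i)⁻¹ * ∑ j ∈ Finset.univ.erase i,
        (Γ i j / dist (xs i) (xs j)) * (inner ℝ (v i - v j) (m i j - xs j) : ℝ))
      - (inner ℝ (∑ j ∈ Finset.univ.erase i,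
          (Γ i j / dist (xs i) (xs j)) • (xs i - xs j)) (v i) : ℝ) = 0 := by
  intro k
  set c : Fin N → Fin N → ℝ := fun i j => Γ i j / dist (xs i) (xs j) with hc
  have hcsymm : ∀ i j, c i j = c j i := by
    intro i j; simp only [hc]; rw [hΓsymm, dist_comm]
  -- simplify the constraint with test function δ_k
  have key := hconstraint (fun i => if i = k then 1 else 0)
  have key2 : ∑ i, ∑ j ∈ Finset.univ.erase i,
      (c i j * ((if i = k then (1:ℝ) else 0) - if j = k then 1 else 0)) *
        (inner ℝ (v i) (m i j - xs i) : ℝ) = 0 := by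
    have step : ∑ i, ∑ j ∈ Finset.univ.erase i,
        (c i j * ((if i = k then (1:ℝ) else 0) - if j = k then 1 else 0)) *
          (inner ℝ (v i) (m i j - xs i) : ℝ)
        = -∑ i, vol i * (inner ℝ (v i)
          (-((vol i)⁻¹ • ∑ j ∈ Finset.univ.erase i,
            ((Γ i j / dist (xs i) (xs j)) * ((if i = k then (1:ℝ) else 0) - if j = k then 1 else 0)) • (m i j - xs i))) : ℝ) := by
      rw [← Finset.sum_neg_distrib]
      apply Finset.sum_congr rfl
      intro i _
      rw [inner_neg_right, real_inner_smul_right, inner_sum, mul_neg, neg_neg,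
        ← mul_assoc, mul_inv_cancel₀ (hvol i).ne', one_mul]
      apply Finset.sum_congr rfl
      intro j _
      rw [real_inner_smul_right]
    rw [step, key, neg_zero]
  -- evaluate the double sum
  have hsplit : ∀ f : Fin N → ℝ, ∑ i, f i = (∑ i ∈ Finset.univ.erase k, f i) + f k := by
    intro f
    exact (Finset.sum_erase_add Finset.univ f (Finset.mem_univ k)).symm
  rw [hsplit] at key2
  have hk : ∑ j ∈ Finset.univ.erase k,
      (c k j * ((if k = k then (1:ℝ) else 0) - if j = k then 1 else 0)) *
        (inner ℝ (v k) (m k j - xs k) : ℝ)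
      = ∑ j ∈ Finset.univ.erase k, c k j * (inner ℝ (v k) (m k j - xs k) : ℝ) := by
    apply Finset.sum_congr rfl
    intro j hj
    rw [if_pos rfl, if_neg (Finset.ne_of_mem_erase hj)]
    ring
  have hrest : ∑ i ∈ Finset.univ.erase k, (∑ j ∈ Finset.univ.erase i,
      (c i j * ((if i = k then (1:ℝ) else 0) - if j = k then 1 else 0)) *
        (inner ℝ (v i) (m i j - xs i) : ℝ))
      = ∑ i ∈ Finset.univ.erase k, -(c i k * (inner ℝ (v i) (m i k - xs i) : ℝ)) := by
    apply Finset.sum_congr rfl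
    intro i hi
    have hik : i ≠ k := Finset.ne_of_mem_erase hi
    rw [Finset.sum_eq_single_of_mem k (Finset.mem_erase.mpr ⟨(Ne.symm hik), Finset.mem_univ k⟩)]
    · rw [if_pos rfl, if_neg hik]; ring
    · intro j _ hjk
      rw [if_neg hjk, if_neg hik]; ring
  rw [hk, hrest] at key2
  have key3 : ∑ j ∈ Finset.univ.erase k, c k j * (inner ℝ (v k) (m k j - xs k) : ℝ)
      = ∑ j ∈ Finset.univ.erase k, c j k * (inner ℝ (v j) (m j k - xs j) : ℝ) := by
    rw [Finset.sum_neg_distrib] at key2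
    linarith [key2]
  -- now the goal
  rw [← mul_assoc, mul_inv_cancel₀ (hvol k).ne', one_mul, sum_inner, sub_eq_zero]
  have lhs_eq : ∑ j ∈ Finset.univ.erase k, c k j * (inner ℝ (v k - v j) (m k j - xs j) : ℝ)
      = (∑ j ∈ Finset.univ.erase k, c k j * (inner ℝ (v k) (m k j - xs k) : ℝ))
        - (∑ j ∈ Finset.univ.erase k, c k j * (inner ℝ (v j) (m k j - xs j) : ℝ))
        + ∑ j ∈ Finset.univ.erase k, (inner ℝ (c k j • (xs k - xs j)) (v k) : ℝ) := by
    rw [← Finset.sum_sub_distrib, ← Finset.sum_add_distrib]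
    apply Finset.sum_congr rfl
    intro j _
    rw [real_inner_smul_left]
    have e1 : m k j - xs j = (m k j - xs k) + (xs k - xs j) := by abel
    rw [e1, inner_add_right, inner_sub_left, inner_sub_left, inner_add_right,
      real_inner_comm (xs k - xs j) (v k)]
    ring
  rw [lhs_eq]
  have h2 : ∑ j ∈ Finset.univ.erase k, c k j * (inner ℝ (v j) (m k j - xs j) : ℝ)
      = ∑ j ∈ Finset.univ.erase k, c j k * (inner ℝ (v j) (m j k - xs j) : ℝ) := by
    apply Finset.sum_congr rfl
    intro j _
    rw [hcsymm, hmsymm]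
  rw [h2, key3]
  ring
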